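/- Equivalently to the substitution description: the code ideal I(C) equals the elimination ideal (I_{H'(p)} + ⟨y_1 − 1, …, y_m − 1⟩) ∩ K[x_1,…,x_n]. -/

import Mathlib

open MvPolynomial

/-- The code ideal I(C) = ⟨x^a − x^b : (a − b mod p) ∈ C⟩ + ⟨x_i^p − 1⟩. -/
noncomputable def codeIdeal (p : ℕ) (K : Type*) [Field K] {n : ℕ}
    (C : Submodule (ZMod p) (Fin n → ZMod p)) : Ideal (MvPolynomial (Fin n) K) :=
  Ideal.span
    ({f | ∃ a b : Fin n →₀ ℕ,
        (fun i => ((a i : ZMod p) - (b i : ZMod p))) ∈ C ∧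
        f = monomial a (1 : K) - monomial b 1} ∪
     {f | ∃ i : Fin n, f = X i ^ p - 1})

/-- The toric ideal of the extended matrix A(p) = (A | p·I_m). -/
noncomputable def toricIdealExt (p : ℕ) (K : Type*) [Field K] {m n : ℕ}
    (A : Matrix (Fin m) (Fin n) ℕ) : Ideal (MvPolynomial (Fin n ⊕ Fin m) K) :=
  RingHom.ker (MvPolynomial.aeval
    (Sum.elim (fun i => ∏ j : Fin m, (X j : MvPolynomial (Fin m) K) ^ A j i)
              (fun j => (X j : MvPolynomial (Fin m) K) ^ p))).toRingHom


/-- product of singles in an AddMonoidAlgebra -/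
lemma my_prod_single {K : Type*} [Field K] {G : Type*} [AddCommMonoid G] {ι : Type*}
    (s : Finset ι) (g : ι → G) :
    (∏ i ∈ s, (AddMonoidAlgebra.single (g i) (1 : K) : AddMonoidAlgebra K G))
      = AddMonoidAlgebra.single (∑ i ∈ s, g i) 1 := by
  classical
  induction s using Finset.induction_on with
  | empty => simp [AddMonoidAlgebra.one_def]
  | insert _ _ h ih =>
      rw [Finset.prod_insert h, ih, AddMonoidAlgebra.single_mul_single, one_mul,
        Finset.sum_insert h]

lemma my_monomial_prod {K : Type*} [Field K] {n : ℕ} (a : Fin n →₀ ℕ) :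
    (monomial a (1 : K)) = ∏ i : Fin n, X i ^ a i := by
  rw [monomial_eq, C_1, one_mul, Finsupp.prod_fintype]
  intro i; exact pow_zero _

set_option maxHeartbeats 1000000 in
set_option synthInstance.maxHeartbeats 400000 in
/-- the code ideal I(C) equals the elimination ideal
(I_{H'(p)} + ⟨y_1 − 1, …, y_m − 1⟩) ∩ K[x_1,…,x_n], where K[x] is embedded in
K[x,y] via the renaming of variables along Sum.inl. -/
theorem stmt_3 (p : ℕ) (hp : p.Prime) (K : Type*) [Field K] (n m k : ℕ)
    (C : Submodule (ZMod p) (Fin n → ZMod p)) (hdim : Module.finrank (ZMod p) C = k)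
    (H : Matrix (Fin m) (Fin n) (ZMod p))
    (hH : ∀ c, c ∈ C ↔ H.mulVec c = 0)
    (H' : Matrix (Fin m) (Fin n) ℕ) (hH' : ∀ i j, ((H' i j : ZMod p)) = H i j) :
    ∀ f : MvPolynomial (Fin n) K,
      f ∈ codeIdeal p K C ↔
        rename Sum.inl f ∈
          toricIdealExt p K H' ⊔
            Ideal.span {q | ∃ j : Fin m, q = (X (Sum.inr j) : MvPolynomial (Fin n ⊕ Fin m) K) - 1} := by
  classical
  intro f
  set ψ : MvPolynomial (Fin n ⊕ Fin m) K →ₐ[K] MvPolynomial (Fin m) K :=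
    MvPolynomial.aeval
      (Sum.elim (fun i => ∏ j : Fin m, (X j : MvPolynomial (Fin m) K) ^ H' j i)
                (fun j => (X j : MvPolynomial (Fin m) K) ^ p)) with hψdef
  set J : Ideal (MvPolynomial (Fin n ⊕ Fin m) K) :=
    toricIdealExt p K H' ⊔
      Ideal.span {q | ∃ j : Fin m, q = (X (Sum.inr j) : MvPolynomial (Fin n ⊕ Fin m) K) - 1}
    with hJ
  have htoric : ∀ u : MvPolynomial (Fin n ⊕ Fin m) K, ψ u = 0 → u ∈ J := by
    intro u hu
    exact Ideal.mem_sup_left (by rw [toricIdealExt, RingHom.mem_ker]; exact hu)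
  -- evaluation of a monomial under ψ
  have hψmon : ∀ (a : Fin n → ℕ) (c : Fin m → ℕ),
      ψ ((∏ i : Fin n, X (Sum.inl i) ^ a i) * ∏ jj : Fin m, X (Sum.inr jj) ^ c jj)
        = ∏ jj : Fin m, (X jj : MvPolynomial (Fin m) K) ^ ((∑ i : Fin n, H' jj i * a i) + p * c jj) := by
    intro a c
    rw [map_mul, map_prod, map_prod]
    simp only [map_pow, aeval_X, Sum.elim_inl, Sum.elim_inr, hψdef]
    have h1 : (∏ i : Fin n, (∏ jj : Fin m, (X jj : MvPolynomial (Fin m) K) ^ H' jj i) ^ a i)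
        = ∏ jj : Fin m, (X jj : MvPolynomial (Fin m) K) ^ (∑ i : Fin n, H' jj i * a i) := by
      have : ∀ i : Fin n, (∏ jj : Fin m, (X jj : MvPolynomial (Fin m) K) ^ H' jj i) ^ a i
          = ∏ jj : Fin m, (X jj : MvPolynomial (Fin m) K) ^ (H' jj i * a i) := by
        intro i
        rw [← Finset.prod_pow]
        exact Finset.prod_congr rfl fun jj _ => by rw [← pow_mul]
      rw [Finset.prod_congr rfl fun i _ => this i, Finset.prod_comm]
      exact Finset.prod_congr rfl fun jj _ => Finset.prod_pow_eq_pow_sum _ _ _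
    have h2 : (∏ jj : Fin m, ((X jj : MvPolynomial (Fin m) K) ^ p) ^ c jj)
        = ∏ jj : Fin m, (X jj : MvPolynomial (Fin m) K) ^ (p * c jj) := by
      exact Finset.prod_congr rfl fun jj _ => by rw [← pow_mul]
    rw [h1, h2, ← Finset.prod_mul_distrib]
    exact Finset.prod_congr rfl fun jj _ => by rw [← pow_add]
  constructor
  · -- forward direction
    intro hf
    set q := Ideal.Quotient.mk J with hq
    rw [← Ideal.Quotient.eq_zero_iff_mem]
    have hy1 : ∀ jj : Fin m, q (X (Sum.inr jj)) = 1 := by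
      intro jj
      have hmem : (X (Sum.inr jj) : MvPolynomial (Fin n ⊕ Fin m) K) - 1 ∈ J :=
        Ideal.mem_sup_right (Ideal.subset_span ⟨jj, rfl⟩)
      have := Ideal.Quotient.eq_zero_iff_mem.2 hmem
      rwa [map_sub, map_one, sub_eq_zero] at this
    have hyprod : ∀ c : Fin m → ℕ, q (∏ jj : Fin m, X (Sum.inr jj) ^ c jj) = 1 := by
      intro c
      rw [map_prod]
      simp [map_pow, hy1]
    have key : ∀ a b : Fin n → ℕ,
        (∀ jj : Fin m, ((∑ i : Fin n, H' jj i * a i : ℕ) : ZMod p)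
            = ((∑ i : Fin n, H' jj i * b i : ℕ) : ZMod p)) →
        q (∏ i : Fin n, X (Sum.inl i) ^ a i) = q (∏ i : Fin n, X (Sum.inl i) ^ b i) := by
      intro a b hab
      set Na : Fin m → ℕ := fun jj => ∑ i : Fin n, H' jj i * a i with hNa
      set Nb : Fin m → ℕ := fun jj => ∑ i : Fin n, H' jj i * b i with hNb
      set t := p - 1 with ht'
      have ht : t + 1 = p := Nat.succ_pred_eq_of_pos hp.pos
      have hdvd : ∀ jj : Fin m, p ∣ Na jj + t * Nb jj := by
        intro jj
        rw [← ZMod.natCast_eq_zero_iff]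
        push_cast
        rw [hab jj]
        have : ((Nb jj : ZMod p)) + (t : ZMod p) * (Nb jj) = ((t + 1 : ℕ) : ZMod p) * Nb jj := by
          push_cast; ring
        rw [this, ht, ZMod.natCast_self, zero_mul]
      set d : Fin m → ℕ := fun jj => (Na jj + t * Nb jj) / p with hd
      have heq : ∀ jj : Fin m, Na jj + p * Nb jj = Nb jj + p * d jj := by
        intro jj
        rw [hd]
        rw [Nat.mul_div_cancel' (hdvd jj)]
        rw [← ht]; ring
      have h1 : q ((∏ i : Fin n, X (Sum.inl i) ^ a i) * ∏ jj : Fin m, X (Sum.inr jj) ^ Nb jj)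
          = q ((∏ i : Fin n, X (Sum.inl i) ^ b i) * ∏ jj : Fin m, X (Sum.inr jj) ^ d jj) := by
        rw [Ideal.Quotient.eq]
        apply htoric
        rw [map_sub, hψmon, hψmon, sub_eq_zero]
        exact Finset.prod_congr rfl fun jj _ => by rw [heq jj]
      have h2 : ∀ (u : MvPolynomial (Fin n ⊕ Fin m) K) (c : Fin m → ℕ),
          q (u * ∏ jj : Fin m, X (Sum.inr jj) ^ c jj) = q u := by
        intro u c; rw [map_mul, hyprod, mul_one]
      rw [h2 _ (fun jj => Nb jj)] at h1
      rw [h2 _ d] at h1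
      exact h1
    -- now show the image of every generator is zero
    have hgen : codeIdeal p K C ≤ RingHom.ker (q.comp ((rename Sum.inl : MvPolynomial (Fin n) K →ₐ[K] MvPolynomial (Fin n ⊕ Fin m) K) : MvPolynomial (Fin n) K →+* MvPolynomial (Fin n ⊕ Fin m) K)) := by
      rw [codeIdeal]
      apply Ideal.span_le.2
      rintro g (⟨a, b, habC, rfl⟩ | ⟨i, rfl⟩)
      · rw [SetLike.mem_coe, RingHom.mem_ker, RingHom.comp_apply]
        rw [map_sub, my_monomial_prod, my_monomial_prod, map_prod, map_prod]
        simp only [RingHom.coe_coe, map_pow, rename_X]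
        rw [map_sub, sub_eq_zero]
        apply key
        intro jj
        rw [hH] at habC
        have hj := congrFun habC jj
        simp only [Matrix.mulVec, dotProduct, Pi.zero_apply] at hj
        push_cast
        simp only [hH']
        have : ∑ i : Fin n, H jj i * ((a i : ZMod p) - (b i : ZMod p)) = 0 := hj
        rw [Finset.sum_congr rfl fun i _ => mul_sub (H jj i) _ _, Finset.sum_sub_distrib,
          sub_eq_zero] at this
        exact this
      · rw [SetLike.mem_coe, RingHom.mem_ker, RingHom.comp_apply]
        simp only [RingHom.coe_coe]
        have hr : (rename Sum.inl) ((X i : MvPolynomial (Fin n) K) ^ p - 1)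
            = (X (Sum.inl i) : MvPolynomial (Fin n ⊕ Fin m) K) ^ p - 1 := by
          rw [map_sub, map_one, map_pow, rename_X]
        rw [hr, map_sub, map_one, sub_eq_zero]
        have ha : (X (Sum.inl i) : MvPolynomial (Fin n ⊕ Fin m) K) ^ p
            = ∏ i' : Fin n, X (Sum.inl i') ^ (if i' = i then p else 0) := by
          rw [Finset.prod_eq_single i (fun b _ hb => by simp [hb]) (by simp)]
          simp
        rw [ha, key (fun i' => if i' = i then p else 0) (fun _ => 0) ?_]
        · simp
        · intro jj
          simp only [mul_ite, mul_zero, Finset.sum_ite_eq', Finset.mem_univ, if_true]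
          push_cast
          simp [ZMod.natCast_self]
    have := hgen hf
    rwa [RingHom.mem_ker, RingHom.comp_apply] at this
  · -- backward direction
    intro hf
    set col : Fin n → (Fin m → ZMod p) := fun i jj => H jj i with hcol
    set χ : MvPolynomial (Fin n) K →ₐ[K] AddMonoidAlgebra K (Fin m → ZMod p) :=
      MvPolynomial.aeval (fun i => AddMonoidAlgebra.single (col i) 1) with hχ
    set Ξ : MvPolynomial (Fin m) K →ₐ[K] AddMonoidAlgebra K (Fin m → ZMod p) :=
      MvPolynomial.aeval (fun jj => AddMonoidAlgebra.single (Pi.single jj (1 : ZMod p)) 1) with hΞ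
    -- Ξ ∘ ψ kills J
    have hpsingle : ∀ jj : Fin m, p • (Pi.single jj (1 : ZMod p) : Fin m → ZMod p) = 0 := by
      intro jj
      funext j'
      simp only [Pi.smul_apply, Pi.zero_apply, Pi.single_apply]
      split <;> simp [nsmul_eq_mul, ZMod.natCast_self]
    have hJker : J ≤ RingHom.ker ((Ξ.toRingHom).comp ψ.toRingHom) := by
      rw [hJ]
      apply sup_le
      · intro u hu
        rw [RingHom.mem_ker, RingHom.comp_apply]
        have : ψ u = 0 := by simpa [toricIdealExt, RingHom.mem_ker, hψdef] using hu
        rw [AlgHom.toRingHom_eq_coe, RingHom.coe_coe, AlgHom.toRingHom_eq_coe, RingHom.coe_coe,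
          this, map_zero]
      · apply Ideal.span_le.2
        rintro g ⟨jj, rfl⟩
        rw [SetLike.mem_coe, RingHom.mem_ker, RingHom.comp_apply]
        rw [AlgHom.toRingHom_eq_coe, RingHom.coe_coe, AlgHom.toRingHom_eq_coe, RingHom.coe_coe]
        rw [map_sub, map_one, map_sub, map_one]
        simp only [hψdef, aeval_X, Sum.elim_inr]
        rw [hΞ, map_pow, aeval_X, AddMonoidAlgebra.single_pow, one_pow, hpsingle,
          sub_eq_zero, AddMonoidAlgebra.one_def]
    have hχf0 : χ f = 0 := by
      have h0 := hJker hf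
      rw [RingHom.mem_ker, RingHom.comp_apply, AlgHom.toRingHom_eq_coe, RingHom.coe_coe,
        AlgHom.toRingHom_eq_coe, RingHom.coe_coe] at h0
      rw [hψdef, aeval_rename] at h0
      have hcomp : Ξ ((aeval ((Sum.elim (fun i => ∏ j : Fin m, (X j : MvPolynomial (Fin m) K) ^ H' j i)
          (fun j => (X j : MvPolynomial (Fin m) K) ^ p)) ∘ Sum.inl)) f) = χ f := by
        have := MvPolynomial.comp_aeval (R := K)
          ((Sum.elim (fun i => ∏ j : Fin m, (X j : MvPolynomial (Fin m) K) ^ H' j i)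
            (fun j => (X j : MvPolynomial (Fin m) K) ^ p)) ∘ Sum.inl) Ξ
        have happ := congrFun (congrArg (fun (φ : MvPolynomial (Fin n) K →ₐ[K] AddMonoidAlgebra K (Fin m → ZMod p)) => (φ : MvPolynomial (Fin n) K → AddMonoidAlgebra K (Fin m → ZMod p))) this) f
        simp only [AlgHom.coe_comp, Function.comp_apply] at happ
        rw [happ]
        rw [hχ]
        have hfun : ∀ i : Fin n, Ξ (((Sum.elim (fun i => ∏ j : Fin m, (X j : MvPolynomial (Fin m) K) ^ H' j i)
            (fun j => (X j : MvPolynomial (Fin m) K) ^ p)) ∘ Sum.inl) i)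
            = AddMonoidAlgebra.single (col i) (1 : K) := by
          intro i
          simp only [Function.comp_apply, Sum.elim_inl]
          rw [map_prod]
          simp only [map_pow, hΞ, aeval_X, AddMonoidAlgebra.single_pow, one_pow]
          rw [my_prod_single]
          congr 1
          funext j'
          rw [Finset.sum_apply]
          rw [Finset.sum_eq_single j' (fun jj _ hjj => by
            simp [Pi.smul_apply, Pi.mul_apply, Pi.natCast_apply, Pi.single_eq_of_ne' hjj])
            (by simp)]
          simp [Pi.smul_apply, Pi.mul_apply, Pi.natCast_apply, Pi.single_eq_same,
            nsmul_eq_mul, hH', hcol]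
        have h2 : (fun i : Fin n => Ξ ((Sum.elim (fun i => ∏ j : Fin m, (X j : MvPolynomial (Fin m) K) ^ H' j i)
            (fun j => (X j : MvPolynomial (Fin m) K) ^ p)) (Sum.inl i)))
            = fun i => AddMonoidAlgebra.single (col i) (1 : K) := by
            funext i; have := hfun i; simp only [Function.comp_apply] at this; exact this
        rw [h2]
      rw [hcomp] at h0
      exact h0
    -- now from χ f = 0 deduce f ∈ codeIdeal
    set φm : (Fin n →₀ ℕ) → (Fin m → ZMod p) := fun a => ∑ i : Fin n, a i • col i with hφm
    have hχmon : ∀ (a : Fin n →₀ ℕ) (c : K),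
        χ (monomial a c) = AddMonoidAlgebra.single (φm a) c := by
      intro a c
      have h1 : (monomial a c : MvPolynomial (Fin n) K) = c • monomial a 1 := by
        rw [smul_monomial, smul_eq_mul, mul_one]
      rw [h1, map_smul, my_monomial_prod, map_prod]
      simp only [map_pow, hχ, aeval_X, AddMonoidAlgebra.single_pow, one_pow]
      rw [my_prod_single]
      rw [AddMonoidAlgebra.smul_single _ _ _]
      rw [smul_eq_mul, mul_one]
    set mkC := Ideal.Quotient.mkₐ K (codeIdeal p K C) with hmkC
    have hmk2 : ∀ a b : Fin n →₀ ℕ, φm a = φm b →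
        mkC (monomial a 1) = mkC (monomial b 1) := by
      intro a b hab2
      rw [hmkC, Ideal.Quotient.mkₐ_eq_mk, Ideal.Quotient.eq]
      apply Ideal.subset_span
      left
      refine ⟨a, b, ?_, rfl⟩
      rw [hH]
      funext jj
      simp only [Matrix.mulVec, dotProduct, Pi.zero_apply]
      have hphia : ∀ u : Fin n →₀ ℕ, (φm u) jj = ∑ i : Fin n, (u i : ZMod p) * H jj i := by
        intro u
        show (∑ i : Fin n, u i • col i) jj = _
        rw [Finset.sum_apply]
        exact Finset.sum_congr rfl fun i _ => by
          simp [hcol, Pi.smul_apply, Pi.mul_apply, Pi.natCast_apply, nsmul_eq_mul]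
      have := congrFun hab2 jj
      rw [hphia, hphia] at this
      have goal0 : ∑ i : Fin n, H jj i * ((a i : ZMod p) - (b i : ZMod p)) = 0 := by
        rw [Finset.sum_congr rfl fun i _ => mul_sub (H jj i) _ _, Finset.sum_sub_distrib,
          sub_eq_zero]
        rw [Finset.sum_congr rfl fun i _ => mul_comm (H jj i) ((a i : ZMod p)),
          Finset.sum_congr rfl fun i _ => mul_comm (H jj i) ((b i : ZMod p))]
        exact this
      exact goal0
    set ℓ : (Fin m → ZMod p) → (MvPolynomial (Fin n) K ⧸ codeIdeal p K C) :=
      fun g => if h : ∃ a : Fin n →₀ ℕ, φm a = g then mkC (monomial h.choose 1) else 0 with hℓ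
    set L : AddMonoidAlgebra K (Fin m → ZMod p) →ₗ[K] (MvPolynomial (Fin n) K ⧸ codeIdeal p K C) :=
      Finsupp.linearCombination K ℓ ∘ₗ (AddMonoidAlgebra.coeffLinearEquiv K).toLinearMap with hL
    have hLχ : ∀ g : MvPolynomial (Fin n) K, L (χ g) = mkC g := by
      intro g
      induction g using MvPolynomial.induction_on' with
      | monomial a c =>
        rw [hχmon]
        have hsingle : L (AddMonoidAlgebra.single (φm a) c : AddMonoidAlgebra K (Fin m → ZMod p))
            = Finsupp.linearCombination K ℓ (Finsupp.single (φm a) c) := rfl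
        rw [hsingle]
        erw [Finsupp.linearCombination_single]
        have hex : ∃ a' : Fin n →₀ ℕ, φm a' = φm a := ⟨a, rfl⟩
        rw [hℓ]
        simp only [dif_pos hex]
        rw [hmk2 _ a hex.choose_spec]
        rw [← map_smul]
        congr 1
        rw [smul_monomial, smul_eq_mul, mul_one]
      | add g1 g2 ih1 ih2 =>
        rw [map_add, map_add, map_add, ih1, ih2]
    have := hLχ f
    rw [hχf0, map_zero] at this
    rw [← Ideal.Quotient.eq_zero_iff_mem, ← Ideal.Quotient.mkₐ_eq_mk K, ← hmkC, ← this]
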